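/- Let F be a Pythagorean field of characteristic not 2 and let H = H(a,b)_F be a quaternion algebra over F. Then the set of commutators {xy − yx : x, y ∈ H} equals exactly the F-span of {i, j, k}, i.e., {αi + βj + γk : α, β, γ ∈ F}. -/

import Mathlib

open Quaternion

theorem stmt_4 (F : Type*) [Field F] (h2 : (2 : F) ≠ 0)
    (hpyth : ∀ x y : F, ∃ z : F, x ^ 2 + y ^ 2 = z ^ 2)
    (a b : F) (ha : a ≠ 0) (hb : b ≠ 0) :
    {x : ℍ[F, -a, -b] | ∃ y z : ℍ[F, -a, -b], x = y * z - z * y} =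
      {x : ℍ[F, -a, -b] | ∃ α β γ : F,
        x = α • (⟨0, 1, 0, 0⟩ : ℍ[F, -a, -b]) + β • ⟨0, 0, 1, 0⟩ + γ • ⟨0, 0, 0, 1⟩} := by
  ext x
  simp only [Set.mem_setOf_eq]
  constructor
  · rintro ⟨y, z, rfl⟩
    refine ⟨(y * z - z * y).imI, (y * z - z * y).imJ, (y * z - z * y).imK, ?_⟩
    ext <;> simp [QuaternionAlgebra.re_mul, QuaternionAlgebra.imI_mul,
      QuaternionAlgebra.imJ_mul, QuaternionAlgebra.imK_mul] <;> ring
  · rintro ⟨α, β, γ, rfl⟩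
    by_cases hβ : β = 0
    · refine ⟨⟨0, 0, 1, 0⟩, ⟨0, -γ / 2, 0, α / (2 * b)⟩, ?_⟩
      subst hβ
      ext <;> simp <;> field_simp <;> ring
    · refine ⟨⟨0, -β / (2 * a), α / (2 * b), 0⟩, ⟨0, 0, -a * γ / β, 1⟩, ?_⟩
      ext <;> simp <;> field_simp <;> ring
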